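/- Work in GL₃ over the field F = ℂ(λ) of rational functions in λ. For u ∈ ℂ, u ≠ 0, let M̌(u) ∈ GL₃(F) be the matrix [[λ,1,0],[0,0,1],[−u,0,0]] (determinant −u ≠ 0), and let ℋ₂ := { diag(1, a₂, a₁) : a₁, a₂ ∈ ℂ, a₁ ≠ 0, a₂ ≠ 0 }. Then the subgroup of GL₃(F) generated by ℋ₂ together with the set { M̌(u)·h·M̌(u)⁻¹ : h ∈ ℋ₂, u ∈ ℂ, u ≠ 0 } equals the set of matrices { [[a₃, 0, a₄·λ],[0, a₂, 0],[0, 0, a₁]] : a₁,a₂,a₃,a₄ ∈ ℂ, a₁ ≠ 0, a₂ ≠ 0, a₃ ≠ 0 }. (This is the group ℋ₃ for the gauge-transformed Darboux–Lax representation of the Bogoyavlensky lattice with p = 2.) -/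

import Mathlib

set_option maxHeartbeats 1000000
set_option synthInstance.maxHeartbeats 1000000

open Matrix

/-- The gauge-transformed Darboux matrix `M̌(u) = [[λ,1,0],[0,0,1],[−u,0,0]]`
of the Bogoyavlensky lattice with `p = 2`, over the field `ℂ(λ)`. -/
noncomputable def bogDarbouxMatrix (u : ℂ) :
    Matrix (Fin 3) (Fin 3) (RatFunc ℂ) :=
  !![RatFunc.X, 1, 0; 0, 0, 1; -(algebraMap ℂ (RatFunc ℂ) u), 0, 0]

/-- The general form of matrices in `ℋ₃`. -/
noncomputable def Tmat (a₁ a₂ a₃ a₄ : ℂ) : Matrix (Fin 3) (Fin 3) (RatFunc ℂ) :=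
  !![algebraMap ℂ (RatFunc ℂ) a₃, 0, algebraMap ℂ (RatFunc ℂ) a₄ * RatFunc.X;
     0, algebraMap ℂ (RatFunc ℂ) a₂, 0;
     0, 0, algebraMap ℂ (RatFunc ℂ) a₁]

lemma Tmul (a₁ a₂ a₃ a₄ b₁ b₂ b₃ b₄ : ℂ) :
    Tmat a₁ a₂ a₃ a₄ * Tmat b₁ b₂ b₃ b₄
      = Tmat (a₁*b₁) (a₂*b₂) (a₃*b₃) (a₃*b₄ + a₄*b₁) := by
  ext i j
  fin_cases i <;> fin_cases j <;>
    simp [Tmat, Matrix.mul_fin_three, _root_.map_mul, _root_.map_add] <;> ring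

lemma Tmat_one : Tmat 1 1 1 0 = 1 := by
  simp [Tmat, Matrix.one_fin_three]

lemma phi_ne {a : ℂ} (h : a ≠ 0) : algebraMap ℂ (RatFunc ℂ) a ≠ 0 := by
  intro h0
  exact h ((algebraMap ℂ (RatFunc ℂ)).injective (by simpa using h0))

/-- `Tmat` as an element of `GL₃`. -/
noncomputable def Tunit (a₁ a₂ a₃ a₄ : ℂ) (h₁ : a₁ ≠ 0) (h₂ : a₂ ≠ 0) (h₃ : a₃ ≠ 0) :
    GL (Fin 3) (RatFunc ℂ) :=
  ⟨Tmat a₁ a₂ a₃ a₄, Tmat a₁⁻¹ a₂⁻¹ a₃⁻¹ (-(a₄ / (a₃ * a₁))),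
   by
     have e : a₃ * -(a₄ / (a₃ * a₁)) + a₄ * a₁⁻¹ = 0 := by
       field_simp
       ring
     rw [Tmul, mul_inv_cancel₀ h₁, mul_inv_cancel₀ h₂, mul_inv_cancel₀ h₃, e, Tmat_one],
   by
     have e : a₃⁻¹ * a₄ + -(a₄ / (a₃ * a₁)) * a₁ = 0 := by
       field_simp
       ring
     rw [Tmul, inv_mul_cancel₀ h₁, inv_mul_cancel₀ h₂, inv_mul_cancel₀ h₃, e, Tmat_one]⟩

lemma Tunit_coe (a₁ a₂ a₃ a₄ : ℂ) (h₁ : a₁ ≠ 0) (h₂ : a₂ ≠ 0) (h₃ : a₃ ≠ 0) :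
    ((Tunit a₁ a₂ a₃ a₄ h₁ h₂ h₃ : GL (Fin 3) (RatFunc ℂ)) :
      Matrix (Fin 3) (Fin 3) (RatFunc ℂ)) = Tmat a₁ a₂ a₃ a₄ := rfl

/-- Conjugating `diag(1,a₂,a₁)` by the Darboux matrix. -/
lemma conj_eq (u a₁ a₂ : ℂ) (hu : u ≠ 0) :
    bogDarbouxMatrix u * Tmat a₁ a₂ 1 0 * (bogDarbouxMatrix u)⁻¹
      = Tmat 1 a₁ a₂ ((a₂ - 1)/u) := by
  have hdet : IsUnit (bogDarbouxMatrix u).det := by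
    have h : (bogDarbouxMatrix u).det = algebraMap ℂ (RatFunc ℂ) (-u) := by
      simp [bogDarbouxMatrix, Matrix.det_fin_three, Matrix.vecHead, Matrix.vecTail]
    rw [h, isUnit_iff_ne_zero]
    exact phi_ne (neg_ne_zero.2 hu)
  have hCu : (RatFunc.C u : RatFunc ℂ) ≠ 0 := by simpa using hu
  have key : bogDarbouxMatrix u * Tmat a₁ a₂ 1 0
      = Tmat 1 a₁ a₂ ((a₂ - 1)/u) * bogDarbouxMatrix u := by
    ext i j
    fin_cases i <;> fin_cases j <;>
      simp [bogDarbouxMatrix, Tmat, Matrix.mul_fin_three]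
    field_simp
    ring
  calc bogDarbouxMatrix u * Tmat a₁ a₂ 1 0 * (bogDarbouxMatrix u)⁻¹
      = Tmat 1 a₁ a₂ ((a₂ - 1)/u) * (bogDarbouxMatrix u * (bogDarbouxMatrix u)⁻¹) := by
        rw [key, Matrix.mul_assoc]
    _ = Tmat 1 a₁ a₂ ((a₂ - 1)/u) := by
        rw [Matrix.mul_nonsing_inv _ hdet, Matrix.mul_one]

/-- The generating set: `ℋ₂` together with its conjugates by Darboux matrices. -/
noncomputable def genS : Set (GL (Fin 3) (RatFunc ℂ)) :=
  { g : GL (Fin 3) (RatFunc ℂ) |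
      ∃ a₁ a₂ : ℂ, a₁ ≠ 0 ∧ a₂ ≠ 0 ∧
        (g : Matrix (Fin 3) (Fin 3) (RatFunc ℂ)) =
          !![1, 0, 0;
             0, algebraMap ℂ (RatFunc ℂ) a₂, 0;
             0, 0, algebraMap ℂ (RatFunc ℂ) a₁] }
    ∪
  { g : GL (Fin 3) (RatFunc ℂ) |
      ∃ a₁ a₂ u : ℂ, a₁ ≠ 0 ∧ a₂ ≠ 0 ∧ u ≠ 0 ∧
        (g : Matrix (Fin 3) (Fin 3) (RatFunc ℂ)) =
          bogDarbouxMatrix u *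
            !![1, 0, 0;
               0, algebraMap ℂ (RatFunc ℂ) a₂, 0;
               0, 0, algebraMap ℂ (RatFunc ℂ) a₁] *
            (bogDarbouxMatrix u)⁻¹ }

lemma diag_eq_Tmat (a₁ a₂ : ℂ) :
    (!![1, 0, 0;
        0, algebraMap ℂ (RatFunc ℂ) a₂, 0;
        0, 0, algebraMap ℂ (RatFunc ℂ) a₁] : Matrix (Fin 3) (Fin 3) (RatFunc ℂ))
      = Tmat a₁ a₂ 1 0 := by
  simp [Tmat]

/-- `ℋ₃` as a subgroup. -/
noncomputable def H3 : Subgroup (GL (Fin 3) (RatFunc ℂ)) where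
  carrier := { g : GL (Fin 3) (RatFunc ℂ) |
      ∃ a₁ a₂ a₃ a₄ : ℂ, a₁ ≠ 0 ∧ a₂ ≠ 0 ∧ a₃ ≠ 0 ∧
        (g : Matrix (Fin 3) (Fin 3) (RatFunc ℂ)) = Tmat a₁ a₂ a₃ a₄ }
  one_mem' := ⟨1, 1, 1, 0, one_ne_zero, one_ne_zero, one_ne_zero, by
    rw [Tmat_one]; rfl⟩
  mul_mem' := by
    rintro x y ⟨a₁, a₂, a₃, a₄, h₁, h₂, h₃, hx⟩ ⟨b₁, b₂, b₃, b₄, g₁, g₂, g₃, hy⟩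
    exact ⟨a₁*b₁, a₂*b₂, a₃*b₃, a₃*b₄ + a₄*b₁, mul_ne_zero h₁ g₁, mul_ne_zero h₂ g₂,
      mul_ne_zero h₃ g₃, by rw [Units.val_mul, hx, hy, Tmul]⟩
  inv_mem' := by
    rintro x ⟨a₁, a₂, a₃, a₄, h₁, h₂, h₃, hx⟩
    have hxe : x = Tunit a₁ a₂ a₃ a₄ h₁ h₂ h₃ := Units.ext hx
    exact ⟨a₁⁻¹, a₂⁻¹, a₃⁻¹, -(a₄ / (a₃ * a₁)), inv_ne_zero h₁, inv_ne_zero h₂,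
      inv_ne_zero h₃, by rw [hxe]; rfl⟩

lemma memA1 {b c : ℂ} (hb : b ≠ 0) (hb1 : b ≠ 1) (hc : c ≠ 0) :
    Tunit 1 1 b c one_ne_zero one_ne_zero hb ∈ Subgroup.closure genS := by
  apply Subgroup.subset_closure
  right
  have hu : (b - 1)/c ≠ 0 := div_ne_zero (sub_ne_zero.2 hb1) hc
  refine ⟨1, b, (b - 1)/c, one_ne_zero, hb, hu, ?_⟩
  have hval : (b - 1)/((b - 1)/c) = c := by
    rw [div_div_eq_mul_div, mul_comm, mul_div_assoc, div_self (sub_ne_zero.2 hb1), mul_one]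
  rw [Tunit_coe, diag_eq_Tmat, conj_eq _ _ _ hu, hval]

lemma memA2 {b : ℂ} (c : ℂ) (hb : b ≠ 0) :
    Tunit 1 1 b c one_ne_zero one_ne_zero hb ∈ Subgroup.closure genS := by
  set b₁ : ℂ := if b = 2 then 3 else 2 with hb₁def
  have hb₁0 : b₁ ≠ 0 := by rw [hb₁def]; split <;> norm_num
  have hb₁1 : b₁ ≠ 1 := by rw [hb₁def]; split <;> norm_num
  have hb₁b : b₁ ≠ b := by
    rw [hb₁def]; split
    · rename_i h; rw [h]; norm_num
    · rename_i h; exact fun hh => h hh.symm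
  set b₂ : ℂ := b / b₁ with hb₂def
  have hb₂0 : b₂ ≠ 0 := div_ne_zero hb hb₁0
  have e1 : b₁ * b₂ = b := by rw [hb₂def]; field_simp
  have hb₂1 : b₂ ≠ 1 := by
    intro hh
    rw [hh, mul_one] at e1
    exact hb₁b e1
  set c₂ : ℂ := if c = b₁ then 2 else 1 with hc₂def
  have hc₂0 : c₂ ≠ 0 := by rw [hc₂def]; split <;> norm_num
  set c₁ : ℂ := c - b₁ * c₂ with hc₁def
  have hc₁0 : c₁ ≠ 0 := by
    rw [hc₁def, hc₂def]; split
    · rename_i h; rw [h]; intro hh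
      apply hb₁0; linear_combination -hh
    · rename_i h; rw [mul_one, sub_ne_zero]; exact h
  have e2 : b₁ * c₂ + c₁ * 1 = c := by rw [hc₁def]; ring
  have hsplit : Tunit 1 1 b c one_ne_zero one_ne_zero hb
      = Tunit 1 1 b₁ c₁ one_ne_zero one_ne_zero hb₁0
        * Tunit 1 1 b₂ c₂ one_ne_zero one_ne_zero hb₂0 := by
    apply Units.ext
    rw [Units.val_mul, Tunit_coe, Tunit_coe, Tunit_coe, Tmul, e1, e2]
    norm_num
  rw [hsplit]
  exact mul_mem (memA1 hb₁0 hb₁1 hc₁0) (memA1 hb₂0 hb₂1 hc₂0)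

/-- The group `ℋ₃` for the gauge-transformed Darboux–Lax representation of the
Bogoyavlensky lattice with `p = 2`: the subgroup of `GL₃(ℂ(λ))` generated by
`ℋ₂ = {diag(1,a₂,a₁)}` together with all conjugates `M̌(u)·h·M̌(u)⁻¹` (for
`h ∈ ℋ₂` and nonzero `u ∈ ℂ`) is exactly the set of matrices
`[[a₃,0,a₄λ],[0,a₂,0],[0,0,a₁]]` with `a₁,a₂,a₃ ≠ 0`. -/
theorem bogoyavlensky_H3_group :
    (Subgroup.closure
      ({ g : GL (Fin 3) (RatFunc ℂ) |
          ∃ a₁ a₂ : ℂ, a₁ ≠ 0 ∧ a₂ ≠ 0 ∧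
            (g : Matrix (Fin 3) (Fin 3) (RatFunc ℂ)) =
              !![1, 0, 0;
                 0, algebraMap ℂ (RatFunc ℂ) a₂, 0;
                 0, 0, algebraMap ℂ (RatFunc ℂ) a₁] }
        ∪
        { g : GL (Fin 3) (RatFunc ℂ) |
          ∃ a₁ a₂ u : ℂ, a₁ ≠ 0 ∧ a₂ ≠ 0 ∧ u ≠ 0 ∧
            (g : Matrix (Fin 3) (Fin 3) (RatFunc ℂ)) =
              bogDarbouxMatrix u *
                !![1, 0, 0;
                   0, algebraMap ℂ (RatFunc ℂ) a₂, 0;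
                   0, 0, algebraMap ℂ (RatFunc ℂ) a₁] *
                (bogDarbouxMatrix u)⁻¹ }) :
      Set (GL (Fin 3) (RatFunc ℂ)))
    = { g : GL (Fin 3) (RatFunc ℂ) |
        ∃ a₁ a₂ a₃ a₄ : ℂ, a₁ ≠ 0 ∧ a₂ ≠ 0 ∧ a₃ ≠ 0 ∧
          (g : Matrix (Fin 3) (Fin 3) (RatFunc ℂ)) =
            !![algebraMap ℂ (RatFunc ℂ) a₃, 0,
                 algebraMap ℂ (RatFunc ℂ) a₄ * RatFunc.X;
               0, algebraMap ℂ (RatFunc ℂ) a₂, 0;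
               0, 0, algebraMap ℂ (RatFunc ℂ) a₁] } := by
  have hmain : Subgroup.closure genS = H3 := by
    apply le_antisymm
    · rw [Subgroup.closure_le]
      rintro g (⟨a₁, a₂, h₁, h₂, hg⟩ | ⟨a₁, a₂, u, h₁, h₂, hu, hg⟩)
      · exact ⟨a₁, a₂, 1, 0, h₁, h₂, one_ne_zero, by rw [hg, diag_eq_Tmat]⟩
      · refine ⟨1, a₁, a₂, (a₂ - 1)/u, one_ne_zero, h₁, h₂, ?_⟩
        rw [hg, diag_eq_Tmat, conj_eq _ _ _ hu]
    · rintro g ⟨a₁, a₂, a₃, a₄, h₁, h₂, h₃, hg⟩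
      have hge : g = Tunit a₁ a₂ a₃ a₄ h₁ h₂ h₃ := Units.ext hg
      have e3 : a₃ * 0 + a₄/a₁ * a₁ = a₄ := by field_simp; ring
      have hsplit : Tunit a₁ a₂ a₃ a₄ h₁ h₂ h₃
          = Tunit 1 1 a₃ (a₄/a₁) one_ne_zero one_ne_zero h₃
            * Tunit a₁ a₂ 1 0 h₁ h₂ one_ne_zero := by
        apply Units.ext
        rw [Units.val_mul, Tunit_coe, Tunit_coe, Tunit_coe, Tmul, e3]
        norm_num
      rw [hge, hsplit]
      refine mul_mem (memA2 _ h₃) (Subgroup.subset_closure ?_)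
      left
      exact ⟨a₁, a₂, h₁, h₂, by rw [Tunit_coe, diag_eq_Tmat]⟩
  show (Subgroup.closure genS : Set (GL (Fin 3) (RatFunc ℂ))) = _
  rw [hmain]
  rfl
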